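/- Let h be a real antisymmetric (2n)×(2n) matrix (h_{νμ} = −h_{μν}) and set A = Σ_{1 ≤ μ < ν ≤ 2n} h_{μν} c_μ c_ν. Then for every μ ∈ {1,…,2n}, conjugation of a single Majorana operator by the matrix exponential of A satisfies exp(A) · c_μ · exp(−A) = Σ_{ν=1}^{2n} (exp(−2h))_{μν} · c_ν, where exp(−2h) is the matrix exponential of the real matrix −2h. -/

import Mathlib

open Matrix Complex
open scoped Kronecker

noncomputable section

abbrev QIdx (n : ℕ) := Fin n → Fin 2
abbrev NMat (n : ℕ) := Matrix (QIdx n) (QIdx n) ℂ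
abbrev NMat2 (n : ℕ) := Matrix (QIdx n × QIdx n) (QIdx n × QIdx n) ℂ

/-- The 2×2 Pauli X matrix. -/
def σX : Matrix (Fin 2) (Fin 2) ℂ := !![0, 1; 1, 0]
/-- The 2×2 Pauli Y matrix. -/
def σY : Matrix (Fin 2) (Fin 2) ℂ := !![0, -Complex.I; Complex.I, 0]
/-- The 2×2 Pauli Z matrix. -/
def σZ : Matrix (Fin 2) (Fin 2) ℂ := !![1, 0; 0, -1]

/-- Tensor (Kronecker) product of `n` one-qubit matrices, realized on index type `Fin n → Fin 2`. -/
def tensor {n : ℕ} (M : Fin n → Matrix (Fin 2) (Fin 2) ℂ) : NMat n :=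
  Matrix.of fun f g => ∏ i, M i (f i) (g i)

/-- The Jordan–Wigner Majorana operator `c_μ` (0-based index: `c_{2i} = Z^{⊗i} X I…`,
`c_{2i+1} = Z^{⊗i} Y I…`). -/
def majorana (n : ℕ) (μ : Fin (2 * n)) : NMat n :=
  tensor fun j =>
    if (j : ℕ) < (μ : ℕ) / 2 then σZ
    else if (j : ℕ) = (μ : ℕ) / 2 then (if (μ : ℕ) % 2 = 0 then σX else σY)
    else 1

/-- Ordered product `c^s` of the Majorana operators indexed by a subset `s`. -/
def cProd (n : ℕ) (s : Finset (Fin (2 * n))) : NMat n :=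
  ((s.sort (· ≤ ·)).map (majorana n)).prod

/-- The module `B_κ`: the complex span of products of `κ` distinct Majoranas. -/
def Bspace (n κ : ℕ) : Submodule ℂ (NMat n) :=
  Submodule.span ℂ {M | ∃ s : Finset (Fin (2 * n)), s.card = κ ∧ M = cProd n s}

/-- The Pauli string with `Z` on qubit `j` and identity elsewhere. -/
def pauliZ (n : ℕ) (j : Fin n) : NMat n := tensor fun k => if k = j then σZ else 1

/-- The Pauli string with `X` on qubits `j` and `j+1` and identity elsewhere. -/
def pauliXX (n : ℕ) (j : Fin n) : NMat n :=
  tensor fun k => if (k : ℕ) = (j : ℕ) ∨ (k : ℕ) = (j : ℕ) + 1 then σX else 1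

/-- The parity operator `P = Z^{⊗n}`. -/
def parity (n : ℕ) : NMat n := tensor fun _ => σZ

/-! ### Auxiliary lemmas: tensor products -/

lemma tensor_mul {n : ℕ} (M N : Fin n → Matrix (Fin 2) (Fin 2) ℂ) :
    tensor M * tensor N = tensor (fun i => M i * N i) := by
  ext f g
  simp only [tensor, Matrix.mul_apply, Matrix.of_apply]
  rw [Fintype.prod_sum]
  exact Finset.sum_congr rfl fun k _ => (Finset.prod_mul_distrib).symm

lemma tensor_one {n : ℕ} : tensor (fun _ : Fin n => 1) = 1 := by
  ext f g
  simp only [tensor, Matrix.of_apply, Matrix.one_apply]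
  by_cases hfg : f = g
  · subst hfg; simp
  · rw [if_neg hfg]
    obtain ⟨i, hi⟩ := Function.ne_iff.mp hfg
    exact Finset.prod_eq_zero (Finset.mem_univ i) (by simp [Matrix.one_apply, hi])

lemma tensor_neg_at {n : ℕ} (M N : Fin n → Matrix (Fin 2) (Fin 2) ℂ) (j : Fin n)
    (hne : ∀ i, i ≠ j → M i = N i) (hj : M j = -N j) : tensor M = - tensor N := by
  ext f g
  simp only [tensor, Matrix.of_apply, Matrix.neg_apply]
  rw [← Finset.mul_prod_erase Finset.univ _ (Finset.mem_univ j),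
      ← Finset.mul_prod_erase Finset.univ (fun i => N i (f i) (g i)) (Finset.mem_univ j)]
  rw [hj]
  rw [Finset.prod_congr rfl (fun i hi => by rw [hne i (Finset.ne_of_mem_erase hi)])]
  simp

/-! ### Pauli matrix relations -/

lemma sq_X : σX * σX = 1 := by
  ext i j; fin_cases i <;> fin_cases j <;>
    simp [σX, Matrix.mul_apply, Fin.sum_univ_two, Matrix.one_apply]
lemma sq_Y : σY * σY = 1 := by
  ext i j; fin_cases i <;> fin_cases j <;>
    simp [σY, Matrix.mul_apply, Fin.sum_univ_two, Matrix.one_apply]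
lemma sq_Z : σZ * σZ = 1 := by
  ext i j; fin_cases i <;> fin_cases j <;>
    simp [σZ, Matrix.mul_apply, Fin.sum_univ_two, Matrix.one_apply]
lemma XZ_anti : σX * σZ = -(σZ * σX) := by
  ext i j; fin_cases i <;> fin_cases j <;> simp [σX, σZ, Matrix.mul_apply, Fin.sum_univ_two]
lemma YZ_anti : σY * σZ = -(σZ * σY) := by
  ext i j; fin_cases i <;> fin_cases j <;> simp [σY, σZ, Matrix.mul_apply, Fin.sum_univ_two]
lemma XY_anti : σX * σY = -(σY * σX) := by
  ext i j; fin_cases i <;> fin_cases j <;> simp [σX, σY, Matrix.mul_apply, Fin.sum_univ_two]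

/-! ### Majorana anticommutation relations -/

lemma majorana_sq (n : ℕ) (μ : Fin (2 * n)) : majorana n μ * majorana n μ = 1 := by
  rw [majorana, tensor_mul]
  rw [show (fun i : Fin n => (if (i : ℕ) < (μ : ℕ) / 2 then σZ
      else if (i : ℕ) = (μ : ℕ) / 2 then (if (μ : ℕ) % 2 = 0 then σX else σY)
      else 1) * (if (i : ℕ) < (μ : ℕ) / 2 then σZ
      else if (i : ℕ) = (μ : ℕ) / 2 then (if (μ : ℕ) % 2 = 0 then σX else σY)
      else 1)) = fun _ => 1 from funext fun i => by
    split_ifs <;> simp [sq_Z, sq_X, sq_Y]]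
  exact tensor_one

lemma majorana_anticomm_lt {n : ℕ} {μ ν : Fin (2 * n)} (hlt : μ < ν) :
    majorana n μ * majorana n ν = -(majorana n ν * majorana n μ) := by
  have hab : (μ : ℕ) / 2 ≤ (ν : ℕ) / 2 := Nat.div_le_div_right hlt.le
  have han : (μ : ℕ) / 2 < n := by have := μ.isLt; omega
  set j : Fin n := ⟨(μ : ℕ) / 2, han⟩ with hjdef
  rw [majorana, majorana, tensor_mul, tensor_mul]
  apply tensor_neg_at _ _ j
  · intro i hi
    have hij : (i : ℕ) ≠ (μ : ℕ) / 2 := fun hc => hi (Fin.ext hc)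
    by_cases hl : (i : ℕ) < (μ : ℕ) / 2
    · rw [if_pos hl, if_pos (lt_of_lt_of_le hl hab)]
    · rw [if_neg hl, if_neg hij, one_mul, mul_one]
  · have hv : (μ : ℕ) < (ν : ℕ) := Fin.lt_iff_val_lt_val.mp hlt
    simp only [hjdef, Fin.val_mk]
    split_ifs <;>
      first
        | omega
        | exact XZ_anti
        | exact YZ_anti
        | exact XY_anti

lemma majorana_anticomm {n : ℕ} {μ ν : Fin (2 * n)} (hne : μ ≠ ν) :
    majorana n μ * majorana n ν = -(majorana n ν * majorana n μ) := by
  rcases lt_or_gt_of_ne hne with hlt | hlt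
  · exact majorana_anticomm_lt hlt
  · rw [majorana_anticomm_lt hlt, neg_neg]

/-! ### The commutator of `A` with a single Majorana -/

lemma comm_term {n : ℕ} (α β μ : Fin (2 * n)) (hab : α < β) :
    majorana n α * majorana n β * majorana n μ - majorana n μ * (majorana n α * majorana n β)
    = if μ = α then (-2 : ℂ) • majorana n β
      else if μ = β then (2 : ℂ) • majorana n α else 0 := by
  have hne : α ≠ β := ne_of_lt hab
  by_cases h1 : μ = α
  · subst h1
    rw [if_pos rfl]
    have e1 : majorana n μ * majorana n β * majorana n μ = -(majorana n β) := by
      calc majorana n μ * majorana n β * majorana n μ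
          = majorana n μ * (majorana n β * majorana n μ) := by rw [mul_assoc]
        _ = majorana n μ * (-(majorana n μ * majorana n β)) := by
            rw [majorana_anticomm hne.symm]
        _ = -(majorana n μ * majorana n μ * majorana n β) := by rw [mul_neg, mul_assoc]
        _ = -(majorana n β) := by rw [majorana_sq, one_mul]
    have e2 : majorana n μ * (majorana n μ * majorana n β) = majorana n β := by
      rw [← mul_assoc, majorana_sq, one_mul]
    rw [e1, e2]; module
  · by_cases h2 : μ = β
    · subst h2
      rw [if_neg h1, if_pos rfl]
      have e1 : majorana n α * majorana n μ * majorana n μ = majorana n α := by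
        rw [mul_assoc, majorana_sq, mul_one]
      have e2 : majorana n μ * (majorana n α * majorana n μ) = -(majorana n α) := by
        calc majorana n μ * (majorana n α * majorana n μ)
            = majorana n μ * majorana n α * majorana n μ := by rw [mul_assoc]
          _ = -(majorana n α * majorana n μ) * majorana n μ := by
              rw [majorana_anticomm h1]
          _ = -(majorana n α * (majorana n μ * majorana n μ)) := by rw [neg_mul, mul_assoc]
          _ = -(majorana n α) := by rw [majorana_sq, mul_one]
      rw [e1, e2]; module
    · rw [if_neg h1, if_neg h2]
      have key : majorana n μ * (majorana n α * majorana n β)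
          = majorana n α * majorana n β * majorana n μ := by
        calc majorana n μ * (majorana n α * majorana n β)
            = majorana n μ * majorana n α * majorana n β := by rw [mul_assoc]
          _ = -(majorana n α * majorana n μ) * majorana n β := by
              rw [majorana_anticomm h1]
          _ = -(majorana n α * (majorana n μ * majorana n β)) := by rw [neg_mul, mul_assoc]
          _ = -(majorana n α * (-(majorana n β * majorana n μ))) := by
              rw [majorana_anticomm h2]
          _ = majorana n α * (majorana n β * majorana n μ) := by rw [mul_neg, neg_neg]
          _ = majorana n α * majorana n β * majorana n μ := by rw [mul_assoc]
      rw [key, sub_self]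

lemma adA_eq {n : ℕ} (h : Matrix (Fin (2 * n)) (Fin (2 * n)) ℝ)
    (hanti : ∀ μ ν, h ν μ = - h μ ν) (A : NMat n)
    (hA : A = ∑ μ : Fin (2 * n), ∑ ν : Fin (2 * n),
      if μ < ν then (h μ ν : ℂ) • (majorana n μ * majorana n ν) else 0)
    (μ : Fin (2 * n)) :
    A * majorana n μ - majorana n μ * A
      = ∑ ν : Fin (2 * n), ((-2 * h μ ν : ℝ) : ℂ) • majorana n ν := by
  have hzero : h μ μ = 0 := by have := hanti μ μ; linarith
  subst hA
  rw [Finset.sum_mul, Finset.mul_sum, ← Finset.sum_sub_distrib]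
  have step1 : ∀ α : Fin (2 * n),
      ((∑ ν : Fin (2 * n), if α < ν then (h α ν : ℂ) • (majorana n α * majorana n ν) else 0)
        * majorana n μ
      - majorana n μ *
        ∑ ν : Fin (2 * n), if α < ν then (h α ν : ℂ) • (majorana n α * majorana n ν) else 0)
      = ∑ β : Fin (2 * n), if α < β then
          (if μ = α then ((h α β : ℂ) * (-2)) • majorana n β
           else if μ = β then ((h α β : ℂ) * 2) • majorana n α else 0) else 0 := by
    intro α
    rw [Finset.sum_mul, Finset.mul_sum, ← Finset.sum_sub_distrib]
    refine Finset.sum_congr rfl fun β _ => ?_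
    by_cases hab : α < β
    · rw [if_pos hab, if_pos hab, smul_mul_assoc, mul_smul_comm, ← smul_sub, comm_term α β μ hab]
      split_ifs <;> simp [smul_smul, mul_comm]
    · rw [if_neg hab, if_neg hab]; simp
  rw [Finset.sum_congr rfl fun α _ => step1 α]
  rw [← Finset.add_sum_erase _ _ (Finset.mem_univ μ)]
  have hfst : (∑ β : Fin (2 * n), if μ < β then
      (if μ = μ then ((h μ β : ℂ) * (-2)) • majorana n β
       else if μ = β then ((h μ β : ℂ) * 2) • majorana n μ else 0) else 0)
      = ∑ β : Fin (2 * n), if μ < β then ((-2 * h μ β : ℝ) : ℂ) • majorana n β else 0 := by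
    refine Finset.sum_congr rfl fun β _ => ?_
    rw [if_pos rfl]
    split_ifs with hb
    · congr 1; push_cast; ring
    · rfl
  have row_eq : ∀ α : Fin (2 * n), α ≠ μ → (∑ β : Fin (2 * n), if α < β then
      (if μ = α then ((h α β : ℂ) * (-2)) • majorana n β
       else if μ = β then ((h α β : ℂ) * 2) • majorana n α else 0) else 0)
      = if α < μ then ((-2 * h μ α : ℝ) : ℂ) • majorana n α else 0 := by
    intro α hαμ
    rw [Finset.sum_eq_single_of_mem μ (Finset.mem_univ μ) ?_]
    · rw [if_neg (Ne.symm hαμ), if_pos rfl]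
      split_ifs with hb
      · congr 1; push_cast [hanti α μ]; ring
      · rfl
    · intro β _ hβμ
      split_ifs with hb hma hmb
      · exact absurd hma.symm hαμ
      · exact absurd hmb.symm hβμ
      · rfl
      · rfl
  have hsnd : (∑ α ∈ Finset.univ.erase μ, ∑ β : Fin (2 * n), if α < β then
      (if μ = α then ((h α β : ℂ) * (-2)) • majorana n β
       else if μ = β then ((h α β : ℂ) * 2) • majorana n α else 0) else 0)
      = ∑ α : Fin (2 * n), if α < μ then ((-2 * h μ α : ℝ) : ℂ) • majorana n α else 0 := by
    rw [Finset.sum_congr rfl fun α hα => row_eq α (Finset.ne_of_mem_erase hα)]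
    exact Finset.sum_erase _ (by rw [if_neg (lt_irrefl μ)])
  rw [hfst, hsnd, ← Finset.sum_add_distrib]
  refine Finset.sum_congr rfl fun ν _ => ?_
  rcases lt_trichotomy μ ν with hlt | heq | hgt
  · rw [if_pos hlt, if_neg (not_lt.mpr hlt.le), add_zero]
  · subst heq
    rw [if_neg (lt_irrefl μ)]
    simp [hzero]
  · rw [if_neg (not_lt.mpr hgt.le), if_pos hgt, zero_add]

/-! ### Abstract Banach-algebra lemmas about `exp` and left/right multiplication -/

section Abstract

open scoped Nat

variable {E : Type*} [NormedRing E] [NormedAlgebra ℂ E] [CompleteSpace E]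

lemma expCLM_apply (T : E →L[ℂ] E) (x : E) :
    NormedSpace.exp T x = ∑' k : ℕ, ((k ! : ℂ))⁻¹ • ((T ^ k) x) := by
  have h2 := ((NormedSpace.expSeries_summable' (𝕂 := ℂ) T).hasSum.mapL
    (ContinuousLinearMap.apply ℂ E x)).tsum_eq
  simp only [ContinuousLinearMap.apply_apply, ContinuousLinearMap.coe_smul',
    Pi.smul_apply] at h2
  rw [NormedSpace.exp_eq_tsum ℂ]
  exact h2.symm

lemma expCLM_mulLeft (C x : E) :
    NormedSpace.exp (ContinuousLinearMap.mul ℂ E C) x = NormedSpace.exp C * x := by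
  have hp : ∀ k : ℕ, ((ContinuousLinearMap.mul ℂ E C) ^ k) x = C ^ k * x := by
    intro k
    induction k with
    | zero => simp
    | succ k ih =>
      rw [pow_succ', ContinuousLinearMap.mul_apply, ih, ContinuousLinearMap.mul_apply',
        ← mul_assoc, ← pow_succ']
  have h2 := ((NormedSpace.expSeries_summable' (𝕂 := ℂ) C).hasSum.mapL
    ((ContinuousLinearMap.mul ℂ E).flip x)).tsum_eq
  simp only [ContinuousLinearMap.flip_apply, ContinuousLinearMap.mul_apply'] at h2
  rw [expCLM_apply, NormedSpace.exp_eq_tsum ℂ]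
  rw [show (∑' k : ℕ, ((k ! : ℂ))⁻¹ • ((ContinuousLinearMap.mul ℂ E C ^ k) x))
      = ∑' k : ℕ, ((k ! : ℂ))⁻¹ • C ^ k * x from
    tsum_congr fun k => by rw [hp, smul_mul_assoc]]
  exact h2

lemma expCLM_mulRight (C x : E) :
    NormedSpace.exp ((ContinuousLinearMap.mul ℂ E).flip C) x = x * NormedSpace.exp C := by
  have hp : ∀ k : ℕ, (((ContinuousLinearMap.mul ℂ E).flip C) ^ k) x = x * C ^ k := by
    intro k
    induction k with
    | zero => simp
    | succ k ih =>
      rw [pow_succ', ContinuousLinearMap.mul_apply, ih, ContinuousLinearMap.flip_apply,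
        ContinuousLinearMap.mul_apply', mul_assoc, ← pow_succ]
  have h2 := ((NormedSpace.expSeries_summable' (𝕂 := ℂ) C).hasSum.mapL
    (ContinuousLinearMap.mul ℂ E x)).tsum_eq
  simp only [ContinuousLinearMap.mul_apply'] at h2
  rw [expCLM_apply, NormedSpace.exp_eq_tsum ℂ]
  rw [show (∑' k : ℕ, ((k ! : ℂ))⁻¹ • ((((ContinuousLinearMap.mul ℂ E).flip C) ^ k) x))
      = ∑' k : ℕ, x * ((k ! : ℂ))⁻¹ • C ^ k from
    tsum_congr fun k => by rw [hp, mul_smul_comm]]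
  exact h2

lemma exp_conj_eq_expAd (A B : E) :
    NormedSpace.exp A * B * NormedSpace.exp (-A)
      = NormedSpace.exp
          (ContinuousLinearMap.mul ℂ E A - (ContinuousLinearMap.mul ℂ E).flip A) B := by
  have hcomm : Commute (ContinuousLinearMap.mul ℂ E A)
      (-(ContinuousLinearMap.mul ℂ E).flip A) := by
    apply Commute.neg_right
    refine ContinuousLinearMap.ext fun x => ?_
    simp only [ContinuousLinearMap.mul_apply, ContinuousLinearMap.mul_apply',
      ContinuousLinearMap.flip_apply, mul_assoc]
  letI : NormedAlgebra ℚ (E →L[ℂ] E) := NormedAlgebra.restrictScalars ℚ ℂ (E →L[ℂ] E)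
  rw [sub_eq_add_neg, NormedSpace.exp_add_of_commute hcomm, ContinuousLinearMap.mul_apply,
    show -(ContinuousLinearMap.mul ℂ E).flip A = (ContinuousLinearMap.mul ℂ E).flip (-A) from
      (map_neg _ _).symm,
    expCLM_mulRight, expCLM_mulLeft, mul_assoc]

end Abstract

open scoped Nat in
set_option maxHeartbeats 1000000 in
/-- For a real antisymmetric matrix `h` and `A = Σ_{μ<ν} h_{μν} c_μ c_ν`, conjugation of a
Majorana operator by `exp(A)` acts as the rotation `exp(−2h)` on the Majorana indices:
`exp(A) c_μ exp(−A) = Σ_ν (exp(−2h))_{μν} c_ν`. -/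
theorem exp_conj_majorana (n : ℕ) (hn : 1 ≤ n)
    (h : Matrix (Fin (2 * n)) (Fin (2 * n)) ℝ) (hanti : ∀ μ ν, h ν μ = - h μ ν)
    (A : NMat n)
    (hA : A = ∑ μ : Fin (2 * n), ∑ ν : Fin (2 * n),
      if μ < ν then (h μ ν : ℂ) • (majorana n μ * majorana n ν) else 0)
    (μ : Fin (2 * n)) :
    NormedSpace.exp A * majorana n μ * NormedSpace.exp (-A) =
      ∑ ν : Fin (2 * n),
        ((NormedSpace.exp ((-2 : ℝ) • h)) μ ν : ℂ) • majorana n ν := by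
  letI : SeminormedRing (NMat n) := Matrix.linftyOpSemiNormedRing
  letI : NormedRing (NMat n) := Matrix.linftyOpNormedRing
  letI : NormedAlgebra ℂ (NMat n) := Matrix.linftyOpNormedAlgebra
  letI : SeminormedRing (Matrix (Fin (2*n)) (Fin (2*n)) ℝ) := Matrix.linftyOpSemiNormedRing
  letI : NormedRing (Matrix (Fin (2*n)) (Fin (2*n)) ℝ) := Matrix.linftyOpNormedRing
  letI : NormedAlgebra ℝ (Matrix (Fin (2*n)) (Fin (2*n)) ℝ) := Matrix.linftyOpNormedAlgebra
  show NormedSpace.exp A * majorana n μ * NormedSpace.exp (-A) =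
      ∑ ν : Fin (2 * n),
        ((NormedSpace.exp ((-2 : ℝ) • h)) μ ν : ℂ) • majorana n ν
  set K : Matrix (Fin (2*n)) (Fin (2*n)) ℝ := (-2 : ℝ) • h with hKdef
  -- the commutator `ad_A` as iterated rotation of the Majorana indices
  have hDapp : ∀ B : NMat n,
      (ContinuousLinearMap.mul ℂ (NMat n) A - (ContinuousLinearMap.mul ℂ (NMat n)).flip A) B
        = A * B - B * A := by
    intro B
    simp [ContinuousLinearMap.mul_apply', ContinuousLinearMap.flip_apply]
  have hpow : ∀ k : ℕ,
      (((ContinuousLinearMap.mul ℂ (NMat n) A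
          - (ContinuousLinearMap.mul ℂ (NMat n)).flip A)) ^ k) (majorana n μ) =
      ∑ ν : Fin (2 * n), ((K ^ k) μ ν : ℂ) • majorana n ν := by
    intro k
    induction k with
    | zero =>
      simp only [pow_zero, ContinuousLinearMap.one_apply]
      symm
      calc ∑ ν : Fin (2*n), (((K ^ 0) μ ν : ℝ) : ℂ) • majorana n ν
          = ∑ ν : Fin (2*n), (if μ = ν then majorana n ν else 0) := by
            refine Finset.sum_congr rfl fun ν _ => ?_
            rw [pow_zero, Matrix.one_apply]
            split_ifs <;> simp
        _ = majorana n μ := by simp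
    | succ k ih =>
      rw [pow_succ', ContinuousLinearMap.mul_apply, ih, map_sum]
      simp_rw [_root_.map_smul]
      have hD : ∀ ν, (ContinuousLinearMap.mul ℂ (NMat n) A
            - (ContinuousLinearMap.mul ℂ (NMat n)).flip A) (majorana n ν)
          = ∑ ρ : Fin (2 * n), ((K ν ρ : ℝ) : ℂ) • majorana n ρ := by
        intro ν
        rw [hDapp, adA_eq h hanti A hA ν]
        refine Finset.sum_congr rfl fun ρ _ => ?_
        simp [hKdef, Matrix.smul_apply, smul_eq_mul]
      calc ∑ ν : Fin (2*n), (((K ^ k) μ ν : ℝ) : ℂ) •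
              ((ContinuousLinearMap.mul ℂ (NMat n) A
                - (ContinuousLinearMap.mul ℂ (NMat n)).flip A) (majorana n ν))
          = ∑ ν : Fin (2*n), ∑ ρ : Fin (2*n),
              ((((K ^ k) μ ν * K ν ρ : ℝ)) : ℂ) • majorana n ρ := by
            refine Finset.sum_congr rfl fun ν _ => ?_
            rw [hD, Finset.smul_sum]
            refine Finset.sum_congr rfl fun ρ _ => ?_
            rw [smul_smul]
            congr 1
            push_cast
            ring
        _ = ∑ ρ : Fin (2*n), (((K ^ (k+1)) μ ρ : ℝ) : ℂ) • majorana n ρ := by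
            rw [Finset.sum_comm]
            refine Finset.sum_congr rfl fun ρ _ => ?_
            rw [← Finset.sum_smul]
            congr 1
            rw [pow_succ, Matrix.mul_apply]
            push_cast
            ring
  -- summability of the real matrix exponential series and its entries
  have hsumK : Summable (fun k : ℕ => ((k ! : ℝ))⁻¹ • K ^ k) :=
    NormedSpace.expSeries_summable' (𝕂 := ℝ) K
  have hentry : ∀ ν : Fin (2*n), Summable (fun k : ℕ => (((k ! : ℝ))⁻¹ • K ^ k) μ ν) := by
    intro ν
    have := hsumK.map
      (AddMonoidHom.mk' (fun M : Matrix (Fin (2*n)) (Fin (2*n)) ℝ => M μ ν) (fun a b => rfl))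
      (by exact (continuous_apply ν).comp (continuous_apply μ))
    exact this
  have hKentry : ∀ ν : Fin (2*n),
      (NormedSpace.exp K) μ ν = ∑' k : ℕ, (((k ! : ℝ))⁻¹ • K ^ k) μ ν := by
    intro ν
    have h2 := (hsumK.hasSum.map
      (AddMonoidHom.mk' (fun M : Matrix (Fin (2*n)) (Fin (2*n)) ℝ => M μ ν) (fun a b => rfl))
      (by exact (continuous_apply ν).comp (continuous_apply μ))).tsum_eq
    simp only [Function.comp] at h2
    rw [NormedSpace.exp_eq_tsum ℝ]
    exact h2.symm
  have hEnd : NormedSpace.exp (ContinuousLinearMap.mul ℂ (NMat n) A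
        - (ContinuousLinearMap.mul ℂ (NMat n)).flip A) (majorana n μ)
      = ∑ ν : Fin (2*n), ((NormedSpace.exp K) μ ν : ℂ) • majorana n ν := by
    rw [expCLM_apply]
    have term : ∀ k : ℕ, ((k ! : ℂ))⁻¹ •
        (((ContinuousLinearMap.mul ℂ (NMat n) A
          - (ContinuousLinearMap.mul ℂ (NMat n)).flip A) ^ k) (majorana n μ))
        = ∑ ν : Fin (2*n), (((((k ! : ℝ))⁻¹ • K ^ k) μ ν : ℝ) : ℂ) • majorana n ν := by
      intro k
      rw [hpow, Finset.smul_sum]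
      refine Finset.sum_congr rfl fun ν _ => ?_
      rw [smul_smul]
      congr 1
      rw [Matrix.smul_apply, smul_eq_mul]
      push_cast
      ring
    refine (tsum_congr term).trans ((Summable.tsum_finsetSum (fun ν _ =>
      (Complex.summable_ofReal.mpr (hentry ν)).smul_const (majorana n ν))).trans ?_)
    refine Finset.sum_congr rfl fun ν _ => ?_
    refine ((Complex.summable_ofReal.mpr (hentry ν)).tsum_smul_const _).trans ?_
    congr 1
    exact (Complex.ofReal_tsum _).symm.trans (congrArg _ (hKentry ν).symm)
  exact (exp_conj_eq_expAd A (majorana n μ)).trans hEnd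

end
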